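/- Let G be a finite simple graph with m edges, let T = C(m,2) + 1 (where C(m,2) = m(m−1)/2), and let H be the T-copy split gadget of G. Let c' be any total coloring of H and let k be a nonnegative integer. If the number of happy edges of H with respect to c' is at least T·(m + k), then there exists an index i ∈ {1,…,T} such that the number of happy edges of H with one endpoint an edge-vertex and the other endpoint in the i-th copy V(G) × {i} is at least m + k. -/

import Mathlib

/-- The number of happy edges (edges whose endpoints share a color) w.r.t. a total coloring. -/
noncomputable def happyEdgeCount {V Col : Type*} (G : SimpleGraph V) (c : V → Col) : ℕ :=
  {e ∈ G.edgeSet | (Sym2.map c e).IsDiag}.ncard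

/-- The `T`-copy split gadget of a graph: `T` copies of each vertex of `G`, each adjacent to
the edge-vertices of its incident edges, and the edge-vertices form a clique. -/
def SplitGadget {V : Type*} (G : SimpleGraph V) (T : ℕ) :
    SimpleGraph ((V × Fin T) ⊕ G.edgeSet) where
  Adj x y :=
    match x, y with
    | Sum.inl a, Sum.inr e => a.1 ∈ (e : Sym2 V)
    | Sum.inr e, Sum.inl a => a.1 ∈ (e : Sym2 V)
    | Sum.inr e, Sum.inr f => e ≠ f
    | _, _ => False
  symm := by
    constructor
    rintro (a | e) (b | f) h <;> simp_all
    exact fun h' => h h'.symm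
  loopless := by
    constructor
    rintro (a | e) h <;> simp_all

lemma ncard_iUnion_le' {α ι : Type*} [Fintype ι] [Finite α] (B : ι → Set α) :
    (⋃ i, B i).ncard ≤ ∑ i, (B i).ncard := by
  classical
  have : Fintype α := Fintype.ofFinite α
  simp_rw [Set.ncard_eq_toFinset_card', Set.toFinset_iUnion]
  exact Finset.card_biUnion_le

/-- Let `T = C(m,2) + 1` and let `c'` be a total coloring of the `T`-copy split gadget `H` of
`G` with at least `T * (m + k)` happy edges.  Then for some copy index `i`, the number of happy
edges of `H` joining an edge-vertex to a vertex of the `i`-th copy is at least `m + k`. -/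
theorem splitGadget_happyEdges_copy
    {V Col : Type*} [Fintype V] [DecidableEq V] (G : SimpleGraph V) [DecidableRel G.Adj]
    (T : ℕ) (hT : T = Nat.choose G.edgeSet.ncard 2 + 1)
    (c' : ((V × Fin T) ⊕ G.edgeSet) → Col) (k : ℕ)
    (h : T * (G.edgeSet.ncard + k) ≤ happyEdgeCount (SplitGadget G T) c') :
    ∃ i : Fin T, G.edgeSet.ncard + k ≤
      {e ∈ (SplitGadget G T).edgeSet | (Sym2.map c' e).IsDiag ∧
        ∃ (u : V) (f : G.edgeSet), e = s(Sum.inl (u, i), Sum.inr f)}.ncard := by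
  classical
  haveI : Finite ((V × Fin T) ⊕ G.edgeSet) := by
    haveI : Finite G.edgeSet := Set.toFinite _
    infer_instance
  set m := G.edgeSet.ncard with hm
  by_contra hcon
  push_neg at hcon
  set H := SplitGadget G T with hH
  set S : Set (Sym2 ((V × Fin T) ⊕ G.edgeSet)) :=
    {e ∈ H.edgeSet | (Sym2.map c' e).IsDiag} with hS
  set B : Fin T → Set (Sym2 ((V × Fin T) ⊕ G.edgeSet)) := fun i =>
    {e ∈ H.edgeSet | (Sym2.map c' e).IsDiag ∧
      ∃ (u : V) (f : G.edgeSet), e = s(Sum.inl (u, i), Sum.inr f)} with hB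
  set A : Set (Sym2 ((V × Fin T) ⊕ G.edgeSet)) :=
    {e ∈ H.edgeSet | ∃ (f g : G.edgeSet), e = s(Sum.inr f, Sum.inr g)} with hA
  have hTpos : 0 < T := by omega
  have i0 : Fin T := ⟨0, hTpos⟩
  rcases Nat.eq_zero_or_pos (m + k) with h0 | hpos
  · exact absurd (hcon i0) (by omega)
  -- every happy edge is either a clique edge or a cross edge in some copy
  have hsub : S ⊆ A ∪ ⋃ i, B i := by
    rintro e ⟨he, hd⟩
    induction e using Sym2.ind with
    | _ x y =>
      have hadj : H.Adj x y := H.mem_edgeSet.1 he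
      match x, y with
      | Sum.inl a, Sum.inl b => exact absurd hadj (by simp [hH, SplitGadget])
      | Sum.inl a, Sum.inr f =>
        exact Or.inr (Set.mem_iUnion.2 ⟨a.2, he, hd, a.1, f, rfl⟩)
      | Sum.inr f, Sum.inl a =>
        refine Or.inr (Set.mem_iUnion.2 ⟨a.2, he, hd, a.1, f, ?_⟩)
        exact Sym2.eq_swap
      | Sum.inr f, Sum.inr g =>
        exact Or.inl ⟨he, f, g, rfl⟩
  -- counting the clique edges
  have hAcard : A.ncard ≤ Nat.choose m 2 := by
    have hsub2 : A ⊆ Set.range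
        (fun p : {a : Sym2 G.edgeSet // ¬ a.IsDiag} => Sym2.map Sum.inr p.1) := by
      rintro e ⟨he, f, g, rfl⟩
      have hadj : H.Adj (Sum.inr f) (Sum.inr g) := H.mem_edgeSet.1 he
      have hne : f ≠ g := by simpa [hH, SplitGadget] using hadj
      exact ⟨⟨s(f, g), by simp [hne]⟩, rfl⟩
    have h1 := Set.ncard_le_ncard hsub2 (Set.toFinite _)
    have h2 : (Set.range
        (fun p : {a : Sym2 G.edgeSet // ¬ a.IsDiag} =>
          Sym2.map (Sum.inr (α := V × Fin T)) p.1)).ncard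
        ≤ Nat.card {a : Sym2 G.edgeSet // ¬ a.IsDiag} := by
      rw [← Set.image_univ]
      refine le_trans (Set.ncard_image_le Set.finite_univ) ?_
      rw [Set.ncard_univ]
    have h3 : Nat.card {a : Sym2 G.edgeSet // ¬ a.IsDiag} = Nat.choose m 2 := by
      haveI : Fintype G.edgeSet := Fintype.ofFinite _
      rw [Nat.card_eq_fintype_card, Sym2.card_subtype_not_diag]
      congr 1
      rw [hm, ← Nat.card_coe_set_eq, Nat.card_eq_fintype_card]
    omega
  -- counting everything
  have hScard : S.ncard ≤ A.ncard + ∑ i, (B i).ncard := by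
    calc S.ncard ≤ (A ∪ ⋃ i, B i).ncard := Set.ncard_le_ncard hsub (Set.toFinite _)
      _ ≤ A.ncard + (⋃ i, B i).ncard := Set.ncard_union_le _ _
      _ ≤ A.ncard + ∑ i, (B i).ncard := by
          gcongr
          exact ncard_iUnion_le' B
  have hBsum : ∑ i, (B i).ncard ≤ T * (m + k - 1) := by
    calc ∑ i, (B i).ncard ≤ ∑ _i : Fin T, (m + k - 1) :=
          Finset.sum_le_sum fun i _ => by
            have h4 : (B i).ncard < m + k := hcon i
            omega
      _ = T * (m + k - 1) := by simp [mul_comm]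
  have hSh : T * (m + k) ≤ S.ncard := h
  have hmul : T * (m + k) = T * (m + k - 1) + T := by
    have h5 : m + k = (m + k - 1) + 1 := by omega
    conv_lhs => rw [h5]
    rw [Nat.mul_succ]
  have hexp : Nat.choose m 2 = T - 1 := by omega
  linarith [hSh, hScard, hBsum, hAcard, hmul, hT, hTpos]
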